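/- Let α ∈ [1/3, 1), let T ∈ (0,∞), let B : [0,T) → ℝ be continuous and nonnegative with ∫₀^T B(s) ds < ∞, let C ≥ 0, and let J : [0,T) → ℝ be differentiable with J(t) > 0 for all t, J(0) = 1, and J'(t) ≥ −B(t) J(t) − C J(t)^{3α} for all t ∈ [0,T). Then there exists c > 0 such that J(t) ≥ c for all t ∈ [0,T). (When α = 1/3 one may take c = exp(−∫₀^T B(s) ds − C T).) -/

import Mathlib

open Set MeasureTheory intervalIntegral

theorem stmt10 (α : ℝ) (hα1 : 1 / 3 ≤ α) (hα2 : α < 1)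
    (T : ℝ) (hT : 0 < T)
    (B : ℝ → ℝ)
    (hBcont : ContinuousOn B (Set.Ico 0 T)) (hBnn : ∀ t ∈ Set.Ico 0 T, 0 ≤ B t)
    (hBint : MeasureTheory.IntegrableOn B (Set.Ico 0 T))
    (C : ℝ) (hC : 0 ≤ C)
    (J J' : ℝ → ℝ)
    (hpos : ∀ t ∈ Set.Ico 0 T, 0 < J t) (hJ0 : J 0 = 1)
    (hderiv : ∀ t ∈ Set.Ico 0 T, HasDerivWithinAt J (J' t) (Set.Ico 0 T) t)
    (hineq : ∀ t ∈ Set.Ico 0 T, -B t * J t - C * J t ^ (3 * α) ≤ J' t) :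
    ∃ c > 0, (∀ t ∈ Set.Ico 0 T, c ≤ J t) ∧
      (α = 1 / 3 → ∀ t ∈ Set.Ico 0 T,
        Real.exp (-(∫ s in Set.Ico (0:ℝ) T, B s) - C * T) ≤ J t) := by
  have hT0 : (0:ℝ) ∈ Set.Ico 0 T := ⟨le_refl 0, hT⟩
  set I : ℝ := ∫ s in Set.Ico (0:ℝ) T, B s with hIdef
  have hBnn_ae : 0 ≤ᵐ[volume.restrict (Set.Ico (0:ℝ) T)] B :=
    (MeasureTheory.ae_restrict_iff' measurableSet_Ico).2 (Filter.Eventually.of_forall hBnn)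
  set F : ℝ → ℝ := fun u => ∫ s in (0:ℝ)..u, B s with hFdef
  have hmemIco : ∀ x ∈ Set.Ico (0:ℝ) T, Set.Ico (0:ℝ) T ∈ nhdsWithin x (Set.Ici x) := by
    intro x hx
    exact mem_nhdsWithin.mpr ⟨Set.Iio T, isOpen_Iio, hx.2, fun y hy => ⟨le_trans hx.1 hy.2, hy.1⟩⟩
  have hsub : ∀ x ∈ Set.Ico (0:ℝ) T, Set.Ioc (0:ℝ) x ⊆ Set.Ico (0:ℝ) T := by
    intro x hx y hy; exact ⟨le_of_lt hy.1, lt_of_le_of_lt hy.2 hx.2⟩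
  have hII : ∀ x ∈ Set.Ico (0:ℝ) T, IntervalIntegrable B volume 0 x := by
    intro x hx
    exact (intervalIntegrable_iff_integrableOn_Ioc_of_le hx.1).mpr (hBint.mono_set (hsub x hx))
  have hFle : ∀ x ∈ Set.Ico (0:ℝ) T, F x ≤ I := by
    intro x hx
    rw [hFdef]
    simp only
    rw [intervalIntegral.integral_of_le hx.1]
    exact MeasureTheory.setIntegral_mono_set hBint hBnn_ae
      (HasSubset.Subset.eventuallyLE (hsub x hx))
  have hFnn : ∀ x ∈ Set.Ico (0:ℝ) T, 0 ≤ F x := by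
    intro x hx
    rw [hFdef]
    simp only
    rw [intervalIntegral.integral_of_le hx.1]
    exact MeasureTheory.setIntegral_nonneg measurableSet_Ioc
      (fun y hy => hBnn y (hsub x hx hy))
  have hFderiv : ∀ x ∈ Set.Ico (0:ℝ) T, HasDerivWithinAt F (B x) (Set.Ico 0 T) x := by
    intro x hx
    rcases eq_or_lt_of_le hx.1 with h0 | h0
    · subst h0
      have hmem' : Set.Ico (0:ℝ) T ∈ nhdsWithin 0 (Set.Ioi 0) :=
        nhdsWithin_mono 0 Set.Ioi_subset_Ici_self (hmemIco 0 hx)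
      have hmeas : StronglyMeasurableAtFilter B (nhdsWithin 0 (Set.Ioi 0)) :=
        ⟨Set.Ico 0 T, hmem', hBint.aestronglyMeasurable⟩
      have hb : ContinuousWithinAt B (Set.Ioi 0) 0 :=
        (hBcont 0 hx).mono_of_mem_nhdsWithin hmem'
      exact (intervalIntegral.integral_hasDerivWithinAt_right (s := Set.Ici 0)
        (t := Set.Ioi 0) (hII 0 hx) hmeas hb).mono (fun y hy => hy.1)
    · have hnb : Set.Ico (0:ℝ) T ∈ nhds x := Ico_mem_nhds h0 hx.2
      have hmeas : StronglyMeasurableAtFilter B (nhds x) :=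
        ⟨Set.Ico 0 T, hnb, hBint.aestronglyMeasurable⟩
      have hb : ContinuousAt B x := (hBcont x hx).continuousAt hnb
      exact (intervalIntegral.integral_hasDerivAt_right (hII x hx) hmeas hb).hasDerivWithinAt
  set f : ℝ → ℝ := fun x => -F x - C * x - Real.log (J x) with hfdef
  have hfderiv : ∀ x ∈ Set.Ico (0:ℝ) T,
      HasDerivWithinAt f (-B x - C - J' x / J x) (Set.Ico 0 T) x := by
    intro x hx
    have h1 := ((hFderiv x hx).neg.sub
      ((hasDerivWithinAt_id x (Set.Ico (0:ℝ) T)).const_mul C)).sub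
      ((hderiv x hx).log (ne_of_gt (hpos x hx)))
    refine h1.congr_deriv ?_
    ring
  have key : ∀ t ∈ Set.Ico (0:ℝ) T, f t ≤ 0 := by
    intro t ht
    have hIccsub : Set.Icc (0:ℝ) t ⊆ Set.Ico 0 T := fun y hy =>
      ⟨hy.1, lt_of_le_of_lt hy.2 ht.2⟩
    have hIcosub : Set.Ico (0:ℝ) t ⊆ Set.Ico 0 T := fun y hy =>
      ⟨hy.1, lt_trans hy.2 ht.2⟩
    have hfc : ContinuousOn f (Set.Icc 0 t) := fun x hx =>
      ((hfderiv x (hIccsub hx)).continuousWithinAt).mono hIccsub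
    have hf' : ∀ x ∈ Set.Ico (0:ℝ) t,
        HasDerivWithinAt f (-B x - C - J' x / J x) (Set.Ici x) x := fun x hx =>
      (hfderiv x (hIcosub hx)).mono_of_mem_nhdsWithin (hmemIco x (hIcosub hx))
    have hF0 : F 0 = 0 := intervalIntegral.integral_same
    have hf0 : f 0 = 0 := by
      simp [hfdef, hF0, hJ0]
    have heps : ∀ ε : ℝ, 0 < ε → f t ≤ ε * (t + 1) := by
      intro ε hε
      have hB' : ∀ x : ℝ, HasDerivAt (fun y => ε * (y + 1)) ε x := by
        intro x
        simpa using ((hasDerivAt_id x).add_const (1:ℝ)).const_mul ε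
      have bound : ∀ x ∈ Set.Ico (0:ℝ) t, f x = ε * (x + 1) →
          -B x - C - J' x / J x < ε := by
        intro x hx heq
        have hxT := hIcosub hx
        have hJx := hpos x hxT
        have hfx : 0 < f x := by
          rw [heq]; exact mul_pos hε (by linarith [hx.1])
        have hlog : Real.log (J x) < 0 := by
          have h1 : 0 ≤ F x := hFnn x hxT
          have h2 : 0 ≤ C * x := mul_nonneg hC hx.1
          simp only [hfdef] at hfx
          linarith
        have hJ1 : J x ≤ 1 := le_of_lt ((Real.log_neg_iff hJx).mp hlog)
        have hrpow : J x ^ (3 * α) ≤ J x := by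
          have h3α : (1:ℝ) ≤ 3 * α := by linarith
          calc J x ^ (3 * α) ≤ J x ^ (1:ℝ) :=
                Real.rpow_le_rpow_of_exponent_ge hJx hJ1 h3α
            _ = J x := Real.rpow_one _
        have hJ' : (-B x - C) * J x ≤ J' x := by
          have h1 := hineq x hxT
          nlinarith [mul_le_mul_of_nonneg_left hrpow hC]
        have : -B x - C ≤ J' x / J x := (le_div_iff₀ hJx).mpr hJ'
        linarith
      have := image_le_of_deriv_right_lt_deriv_boundary hfc hf'
        (by rw [hf0]; positivity) hB' bound (Set.right_mem_Icc.mpr ht.1)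
      exact this
    have ht1 : (0:ℝ) < t + 1 := by linarith [ht.1]
    have h0 : f t ≤ 0 + 0 → f t ≤ 0 := by intro h; linarith
    apply h0
    refine le_of_forall_pos_le_add fun ε hε => ?_
    have := heps (ε / (t + 1)) (by positivity)
    rw [div_mul_cancel₀ _ (ne_of_gt ht1)] at this
    linarith
  have main : ∀ t ∈ Set.Ico (0:ℝ) T, Real.exp (-I - C * T) ≤ J t := by
    intro t ht
    have hft := key t ht
    have hlog : -F t - C * t ≤ Real.log (J t) := by
      simp only [hfdef] at hft; linarith
    have h1 : -I - C * T ≤ -F t - C * t := by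
      have := hFle t ht
      have : C * t ≤ C * T := mul_le_mul_of_nonneg_left (le_of_lt ht.2) hC
      linarith [hFle t ht]
    calc Real.exp (-I - C * T) ≤ Real.exp (Real.log (J t)) :=
          Real.exp_le_exp.mpr (le_trans h1 hlog)
      _ = J t := Real.exp_log (hpos t ht)
  exact ⟨Real.exp (-I - C * T), Real.exp_pos _, main, fun _ => main⟩
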